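/- arXiv:2102.06104 — 2 statements merged into one kernel-verified Lean document; each statement's English description precedes it below -/
import Mathlib

section
/- Let ψ be an abelian map on a group G and m, n ≥ 0. The operations ∘_m and ∘_n coincide (g ∘_m h = g ∘_n h for all g, h ∈ G) if and only if ψ_m(g)·ψ_n(g⁻¹) lies in the center Z(G) of G for every g ∈ G. -/
/-- `aDelta ψ g = g · ψ(g⁻¹)`, the map `δ = 1 - ψ`. -/
def aDelta {G : Type*} [Group G] (ψ : G → G) (g : G) : G := g * ψ g⁻¹

/-- `aPsi ψ n g = (δⁿ(g))⁻¹ · g`, the map `ψ_n = -(1-ψ)ⁿ + 1` (so `ψ_0 = 0`, `ψ_1 = ψ`). -/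
def aPsi {G : Type*} [Group G] (ψ : G → G) (n : ℕ) (g : G) : G :=
  ((aDelta ψ)^[n] g)⁻¹ * g

/-- `g ∘_n h = g · ψ_n(g⁻¹) · h · ψ_n(g)`. -/
def aCirc {G : Type*} [Group G] (ψ : G → G) (n : ℕ) (g h : G) : G :=
  g * aPsi ψ n g⁻¹ * h * aPsi ψ n g

section Aux

variable {G : Type*} [Group G] {ψ : G → G}

lemma aPsi_one (hψ : ∀ a b : G, ψ (a * b) = ψ a * ψ b) : ψ 1 = 1 := by
  have h := hψ 1 1
  rw [one_mul] at h
  exact mul_eq_left.mp h.symm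

lemma aPsi_map_inv (hψ : ∀ a b : G, ψ (a * b) = ψ a * ψ b) (a : G) :
    ψ a⁻¹ = (ψ a)⁻¹ := by
  have h : ψ a⁻¹ * ψ a = 1 := by rw [← hψ, inv_mul_cancel, aPsi_one hψ]
  exact eq_inv_of_mul_eq_one_left h

lemma aPsi_succ (hψ : ∀ a b : G, ψ (a * b) = ψ a * ψ b) (n : ℕ) (g : G) :
    aPsi ψ (n + 1) g = ψ ((aDelta ψ)^[n] g) * aPsi ψ n g := by
  unfold aPsi
  rw [Function.iterate_succ_apply']
  show ((aDelta ψ)^[n] g * ψ ((aDelta ψ)^[n] g)⁻¹)⁻¹ * g = _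
  rw [aPsi_map_inv hψ, mul_inv_rev, inv_inv, mul_assoc]

lemma aPsi_range (hψ : ∀ a b : G, ψ (a * b) = ψ a * ψ b) (n : ℕ) (g : G) :
    ∃ x, aPsi ψ n g = ψ x := by
  induction n with
  | zero =>
    refine ⟨1, ?_⟩
    rw [aPsi_one hψ]
    simp [aPsi]
  | succ n ih =>
    obtain ⟨x, hx⟩ := ih
    exact ⟨(aDelta ψ)^[n] g * x, by rw [aPsi_succ hψ, hx, hψ]⟩

lemma aDelta_iter_eq (n : ℕ) (g : G) :
    (aDelta ψ)^[n] g = g * (aPsi ψ n g)⁻¹ := by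
  unfold aPsi
  group

lemma aPsi_inv (hψ : ∀ a b : G, ψ (a * b) = ψ a * ψ b)
    (hab : ∀ a b : G, ψ a * ψ b = ψ b * ψ a) (n : ℕ) (g : G) :
    aPsi ψ n g⁻¹ = (aPsi ψ n g)⁻¹ := by
  induction n with
  | zero => simp [aPsi]
  | succ n ih =>
    obtain ⟨x, hx⟩ := aPsi_range hψ n g
    rw [aPsi_succ hψ, aPsi_succ hψ, aDelta_iter_eq, aDelta_iter_eq, ih, hx, inv_inv,
      hψ, hψ, aPsi_map_inv hψ g, aPsi_map_inv hψ (ψ x)]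
    have cab : Commute (ψ g) (ψ (ψ x)) := hab g (ψ x)
    have cac : Commute (ψ g) (ψ x) := hab g x
    have cbc : Commute (ψ (ψ x)) (ψ x) := hab (ψ x) x
    rw [mul_inv_rev, mul_inv_rev, inv_inv,
      (cac.inv_inv.mul_left cbc.inv_right).eq, cab.inv_left.eq]

/-- Conjugation equality iff commutator centrality. -/
lemma conj_eq_iff {a b h : G} :
    a⁻¹ * h * a = b⁻¹ * h * b ↔ h * (a * b⁻¹) = a * b⁻¹ * h := by
  constructor
  · intro H
    have := congrArg (fun x => a * x * b⁻¹) H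
    simp only [mul_assoc, mul_inv_cancel_left, mul_inv_cancel, mul_one] at this
    simpa [mul_assoc] using this
  · intro H
    have := congrArg (fun x => a⁻¹ * x * b) H
    simpa [mul_assoc] using this

end Aux

/-- `∘_m = ∘_n` if and only if `(ψ_m - ψ_n)(G) ⊆ Z(G)`,
i.e. `ψ_m(g)·ψ_n(g⁻¹) ∈ Z(G)` for all `g`. -/
theorem stmt10 {G : Type*} [Group G] (ψ : G → G)
    (hψ : ∀ a b : G, ψ (a * b) = ψ a * ψ b)
    (hab : ∀ a b : G, ψ a * ψ b = ψ b * ψ a)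
    (m n : ℕ) :
    (∀ g h : G, aCirc ψ m g h = aCirc ψ n g h) ↔
      (∀ g : G, aPsi ψ m g * aPsi ψ n g⁻¹ ∈ Subgroup.center G) := by
  constructor
  · intro H g
    rw [Subgroup.mem_center_iff]
    intro h
    have hE := H g h
    unfold aCirc at hE
    rw [aPsi_inv hψ hab m g, aPsi_inv hψ hab n g] at hE
    rw [aPsi_inv hψ hab n g]
    -- hE : g * (aPsi ψ m g)⁻¹ * h * aPsi ψ m g = g * (aPsi ψ n g)⁻¹ * h * aPsi ψ n g
    have h2 : (aPsi ψ m g)⁻¹ * h * aPsi ψ m g = (aPsi ψ n g)⁻¹ * h * aPsi ψ n g := by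
      have := congrArg (fun x => g⁻¹ * x) hE
      simpa [mul_assoc] using this
    exact conj_eq_iff.mp h2
  · intro H g h
    have hz := H g
    rw [aPsi_inv hψ hab n g, Subgroup.mem_center_iff] at hz
    unfold aCirc
    rw [aPsi_inv hψ hab m g, aPsi_inv hψ hab n g]
    have h2 : (aPsi ψ m g)⁻¹ * h * aPsi ψ m g = (aPsi ψ n g)⁻¹ * h * aPsi ψ n g :=
      conj_eq_iff.mpr (hz h)
    calc g * (aPsi ψ m g)⁻¹ * h * aPsi ψ m g
        = g * ((aPsi ψ m g)⁻¹ * h * aPsi ψ m g) := by group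
      _ = g * ((aPsi ψ n g)⁻¹ * h * aPsi ψ n g) := by rw [h2]
      _ = g * (aPsi ψ n g)⁻¹ * h * aPsi ψ n g := by group
end

section
/- Let ψ be an abelian map on a group G and n ≥ 0. Then the image δⁿ(G) = { δⁿ(g) : g ∈ G } is a subgroup of G, and the operation ∘_n is commutative if and only if δⁿ(g)·δⁿ(h) = δⁿ(h)·δⁿ(g) for all g, h ∈ G. -/
section Aux
variable {G : Type*} [Group G] (ψ : G → G)
  (hψ : ∀ a b : G, ψ (a * b) = ψ a * ψ b)
  (hab : ∀ a b : G, ψ a * ψ b = ψ b * ψ a)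
include hψ hab
set_option linter.unusedSectionVars false

lemma psi_one : ψ 1 = 1 := by
  have := hψ 1 1; simpa using this.symm

lemma psi_inv (a : G) : ψ a⁻¹ = (ψ a)⁻¹ := by
  have h := hψ a a⁻¹
  rw [mul_inv_cancel, psi_one ψ hψ hab] at h
  exact eq_inv_of_mul_eq_one_right h.symm

lemma delta_one : aDelta ψ 1 = 1 := by
  simp [aDelta, psi_one ψ hψ hab]

lemma dn_one (n : ℕ) : (aDelta ψ)^[n] (1 : G) = 1 := by
  induction n with
  | zero => simp
  | succ n ih => rw [Function.iterate_succ_apply', ih, delta_one ψ hψ hab]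

lemma psin_zero (a : G) : aPsi ψ 0 a = 1 := by simp [aPsi]

lemma dn_eq (n : ℕ) (a : G) : (aDelta ψ)^[n] a = a * (aPsi ψ n a)⁻¹ := by
  simp [aPsi]

lemma psin_succ (n : ℕ) (a : G) :
    aPsi ψ (n+1) a = ψ ((aDelta ψ)^[n] a) * aPsi ψ n a := by
  rw [aPsi, aPsi, Function.iterate_succ_apply', aDelta,
    psi_inv ψ hψ hab, mul_inv_rev, inv_inv]
  group

/-- ψₙ-values commute with ψ-values. -/
lemma comm1 (n : ℕ) (a b : G) : aPsi ψ n a * ψ b = ψ b * aPsi ψ n a := by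
  induction n with
  | zero => simp [aPsi]
  | succ n ih =>
      rw [psin_succ ψ hψ hab, mul_assoc, ih, ← mul_assoc, hab, mul_assoc]

/-- ψₙ-values commute with each other. -/
lemma comm_n (n : ℕ) (a b : G) : aPsi ψ n a * aPsi ψ n b = aPsi ψ n b * aPsi ψ n a := by
  induction n with
  | zero => simp [aPsi]
  | succ n ih =>
      rw [psin_succ ψ hψ hab, psin_succ ψ hψ hab]
      calc ψ ((aDelta ψ)^[n] a) * aPsi ψ n a * (ψ ((aDelta ψ)^[n] b) * aPsi ψ n b)
          = ψ ((aDelta ψ)^[n] a) * (aPsi ψ n a * ψ ((aDelta ψ)^[n] b)) * aPsi ψ n b := by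
            group
        _ = ψ ((aDelta ψ)^[n] a) * (ψ ((aDelta ψ)^[n] b) * aPsi ψ n a) * aPsi ψ n b := by
            rw [comm1 ψ hψ hab]
        _ = (ψ ((aDelta ψ)^[n] a) * ψ ((aDelta ψ)^[n] b)) * (aPsi ψ n a * aPsi ψ n b) := by
            group
        _ = (ψ ((aDelta ψ)^[n] b) * ψ ((aDelta ψ)^[n] a)) * (aPsi ψ n b * aPsi ψ n a) := by
            rw [hab, ih]
        _ = ψ ((aDelta ψ)^[n] b) * (ψ ((aDelta ψ)^[n] a) * aPsi ψ n b) * aPsi ψ n a := by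
            group
        _ = ψ ((aDelta ψ)^[n] b) * (aPsi ψ n b * ψ ((aDelta ψ)^[n] a)) * aPsi ψ n a := by
            rw [comm1 ψ hψ hab]
        _ = ψ ((aDelta ψ)^[n] b) * aPsi ψ n b * (ψ ((aDelta ψ)^[n] a) * aPsi ψ n a) := by
            group

/-- ψₙ is a homomorphism. -/
lemma psin_hom (n : ℕ) (a b : G) : aPsi ψ n (a*b) = aPsi ψ n a * aPsi ψ n b := by
  induction n with
  | zero => simp [aPsi]
  | succ n ih =>
      rw [psin_succ ψ hψ hab, psin_succ ψ hψ hab, psin_succ ψ hψ hab,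
        dn_eq ψ hψ hab n (a*b), dn_eq ψ hψ hab n a, dn_eq ψ hψ hab n b, ih]
      have h1 : ψ (a * b * (aPsi ψ n a * aPsi ψ n b)⁻¹)
          = ψ (a * (aPsi ψ n a)⁻¹) * ψ (b * (aPsi ψ n b)⁻¹) := by
        rw [mul_inv_rev, hψ, hψ, hψ, hψ, psi_inv ψ hψ hab, psi_inv ψ hψ hab]
        have c1 : Commute (ψ b) (ψ (aPsi ψ n a)) := hab _ _
        have c2 : Commute (ψ (aPsi ψ n b)) (ψ (aPsi ψ n a)) := hab _ _
        have key : (ψ b * (ψ (aPsi ψ n b))⁻¹) * (ψ (aPsi ψ n a))⁻¹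
            = (ψ (aPsi ψ n a))⁻¹ * (ψ b * (ψ (aPsi ψ n b))⁻¹) :=
          ((c1.mul_left c2.inv_left).inv_right).eq
        rw [mul_assoc (ψ a) (ψ b), ← mul_assoc (ψ b), key, ← mul_assoc, hψ b, psi_inv ψ hψ hab]
      rw [h1]
      have c2 : aPsi ψ n a * ψ (b * (aPsi ψ n b)⁻¹) = ψ (b * (aPsi ψ n b)⁻¹) * aPsi ψ n a :=
        comm1 ψ hψ hab n a _
      calc ψ (a * (aPsi ψ n a)⁻¹) * ψ (b * (aPsi ψ n b)⁻¹) * (aPsi ψ n a * aPsi ψ n b)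
          = ψ (a * (aPsi ψ n a)⁻¹) * (ψ (b * (aPsi ψ n b)⁻¹) * aPsi ψ n a) * aPsi ψ n b := by
            group
        _ = ψ (a * (aPsi ψ n a)⁻¹) * (aPsi ψ n a * ψ (b * (aPsi ψ n b)⁻¹)) * aPsi ψ n b := by
            rw [c2]
        _ = ψ (a * (aPsi ψ n a)⁻¹) * aPsi ψ n a * (ψ (b * (aPsi ψ n b)⁻¹) * aPsi ψ n b) := by
            group

lemma psin_one (n : ℕ) : aPsi ψ n (1 : G) = 1 := by
  simp [aPsi, dn_one ψ hψ hab]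

lemma psin_inv (n : ℕ) (a : G) : aPsi ψ n a⁻¹ = (aPsi ψ n a)⁻¹ := by
  have h := psin_hom ψ hψ hab n a a⁻¹
  rw [mul_inv_cancel, psin_one ψ hψ hab] at h
  exact eq_inv_of_mul_eq_one_right h.symm

lemma circ_eq (n : ℕ) (g h : G) :
    aCirc ψ n g h = (aDelta ψ)^[n] g * (aDelta ψ)^[n] h * aPsi ψ n h * aPsi ψ n g := by
  rw [aCirc, psin_inv ψ hψ hab, dn_eq ψ hψ hab n g, dn_eq ψ hψ hab n h]
  group

/-- δⁿ is multiplicative from ∘ₙ to ·. -/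
lemma dn_circ (n : ℕ) (g h : G) :
    (aDelta ψ)^[n] (aCirc ψ n g h) = (aDelta ψ)^[n] g * (aDelta ψ)^[n] h := by
  have c : aPsi ψ n h * aPsi ψ n (aPsi ψ n g)
      = aPsi ψ n (aPsi ψ n g) * aPsi ψ n h := comm_n ψ hψ hab n h _
  have hk : aPsi ψ n (aCirc ψ n g h) = aPsi ψ n g * aPsi ψ n h := by
    rw [aCirc, psin_hom ψ hψ hab, psin_hom ψ hψ hab, psin_hom ψ hψ hab,
      psin_inv ψ hψ hab, psin_inv ψ hψ hab, mul_assoc _ (aPsi ψ n h), c]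
    group
  rw [dn_eq ψ hψ hab n (aCirc ψ n g h), hk, aCirc, psin_inv ψ hψ hab,
    dn_eq ψ hψ hab n g, dn_eq ψ hψ hab n h, mul_inv_rev]
  have cgh : Commute (aPsi ψ n g) (aPsi ψ n h) := comm_n ψ hψ hab n g h
  have c2 : aPsi ψ n g * (aPsi ψ n h)⁻¹ = (aPsi ψ n h)⁻¹ * aPsi ψ n g :=
    (cgh.inv_right).eq
  rw [mul_assoc _ (aPsi ψ n g), ← mul_assoc (aPsi ψ n g), c2]
  group

end Aux

/-- For an abelian map ψ and `n ≥ 0`: `δⁿ(G)` is a subgroup of `G`, and `∘_n` is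
commutative if and only if the elements `δⁿ(g)` pairwise commute. -/
theorem stmt13 {G : Type*} [Group G] (ψ : G → G)
    (hψ : ∀ a b : G, ψ (a * b) = ψ a * ψ b)
    (hab : ∀ a b : G, ψ a * ψ b = ψ b * ψ a)
    (n : ℕ) :
    (∃ H : Subgroup G, (H : Set G) = Set.range ((aDelta ψ)^[n])) ∧
    ((∀ g h : G, aCirc ψ n g h = aCirc ψ n h g) ↔
      (∀ g h : G, (aDelta ψ)^[n] g * (aDelta ψ)^[n] h =
        (aDelta ψ)^[n] h * (aDelta ψ)^[n] g)) := by
  constructor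
  · have hm : ∀ x y : G, x ∈ Set.range ((aDelta ψ)^[n]) →
        y ∈ Set.range ((aDelta ψ)^[n]) → x * y ∈ Set.range ((aDelta ψ)^[n]) := by
      rintro x y ⟨a, rfl⟩ ⟨b, rfl⟩
      exact ⟨aCirc ψ n a b, dn_circ ψ hψ hab n a b⟩
    have hi : ∀ x : G, x ∈ Set.range ((aDelta ψ)^[n]) →
        x⁻¹ ∈ Set.range ((aDelta ψ)^[n]) := by
      rintro x ⟨a, rfl⟩
      refine ⟨aPsi ψ n a * a⁻¹ * (aPsi ψ n a)⁻¹, ?_⟩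
      have h1 : aCirc ψ n a (aPsi ψ n a * a⁻¹ * (aPsi ψ n a)⁻¹) = 1 := by
        rw [aCirc, psin_inv ψ hψ hab]; group
      have h2 := dn_circ ψ hψ hab n a (aPsi ψ n a * a⁻¹ * (aPsi ψ n a)⁻¹)
      rw [h1, dn_one ψ hψ hab] at h2
      exact eq_inv_of_mul_eq_one_right h2.symm
    exact ⟨{ carrier := Set.range ((aDelta ψ)^[n])
             one_mem' := ⟨1, dn_one ψ hψ hab n⟩
             mul_mem' := fun ha hb => hm _ _ ha hb
             inv_mem' := fun ha => hi _ ha }, rfl⟩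
  · constructor
    · intro hc g h
      have e1 := hc g h
      rw [circ_eq ψ hψ hab, circ_eq ψ hψ hab,
        mul_assoc _ (aPsi ψ n g) (aPsi ψ n h), comm_n ψ hψ hab n g h,
        ← mul_assoc] at e1
      exact mul_right_cancel (mul_right_cancel e1)
    · intro hd g h
      rw [circ_eq ψ hψ hab, circ_eq ψ hψ hab, hd g h,
        mul_assoc _ (aPsi ψ n h) (aPsi ψ n g), comm_n ψ hψ hab n h g,
        ← mul_assoc]
end
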